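/- Utilitarian PoC upper bound for paths with n ≥ 3 agents: for a path G on m vertices and n ≥ 3 agents, the utilitarian price of connectivity is at most n − 1/(nm). Key steps: if the unconstrained optimal welfare exceeds n − 1/(nm), then every item gives value ≥ 1/(nm) to at most one agent; some item g_j satisfies u_1(g_j) ≥ 1/m and hence u_2(g_j) < 1/(nm); setting r = (n−1)/(2nm), either the prefix sums before g_j or through g_j of u_1 and u_2 differ by at least r, producing a two-interval connected allocation with utilitarian welfare at least 1 + r; finally n/(1+r) ≤ n − 1/(nm) for all n ≥ 3. -/

import Mathlib

def ConnB {V : Type*} (G : SimpleGraph V) (s : Finset V) : Prop :=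
  s = ∅ ∨ (G.induce (s : Set V)).Connected

def IsAlloc {V : Type*} [Fintype V] [DecidableEq V] {n : ℕ} (A : Fin n → Finset V) : Prop :=
  (∀ i j : Fin n, i ≠ j → Disjoint (A i) (A j)) ∧ Finset.univ.biUnion A = Finset.univ

/-- The path on `m` vertices `0 — 1 — ⋯ — (m-1)`. -/
def pathGraph (m : ℕ) : SimpleGraph (Fin m) where
  Adj x y := x.val + 1 = y.val ∨ y.val + 1 = x.val
  symm := by constructor; rintro x y (h | h); exacts [Or.inr h, Or.inl h]
  loopless := by constructor; rintro x (h | h) <;> omega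

lemma interval_reach {m : ℕ} (s : Finset (Fin m))
    (hs : ∀ x y z : Fin m, x ∈ s → z ∈ s → x.val ≤ y.val → y.val ≤ z.val → y ∈ s) :
    ∀ d (x y : Fin m) (hx : x ∈ s) (hy : y ∈ s), y.val = x.val + d →
      ((pathGraph m).induce (↑s : Set (Fin m))).Reachable ⟨x, hx⟩ ⟨y, hy⟩ := by
  intro d
  induction d with
  | zero =>
    intro x y hx hy h
    have : x = y := Fin.ext (by omega)
    subst this; rfl
  | succ d ih =>
    intro x y hx hy h
    have hzlt : x.val + d < m := by omega
    set z : Fin m := ⟨x.val + d, hzlt⟩ with hz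
    have hzs : z ∈ s := hs x z y hx hy (by simp [hz]) (by simp [hz]; omega)
    have h1 : ((pathGraph m).induce (↑s : Set (Fin m))).Reachable ⟨x, hx⟩ ⟨z, hzs⟩ :=
      ih x z hx hzs rfl
    have h2 : ((pathGraph m).induce (↑s : Set (Fin m))).Adj ⟨z, hzs⟩ ⟨y, hy⟩ := by
      show (pathGraph m).Adj z y
      left; simp [hz]; omega
    exact h1.trans h2.reachable

lemma interval_connB {m : ℕ} (s : Finset (Fin m))
    (hs : ∀ x y z : Fin m, x ∈ s → z ∈ s → x.val ≤ y.val → y.val ≤ z.val → y ∈ s) :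
    ConnB (pathGraph m) s := by
  rcases s.eq_empty_or_nonempty with h | ⟨x0, hx0⟩
  · exact Or.inl h
  · right
    have hne : Nonempty (↑(↑s : Set (Fin m)) : Type _) := ⟨⟨x0, hx0⟩⟩
    refine SimpleGraph.Connected.mk ?_
    rintro ⟨x, hx⟩ ⟨y, hy⟩
    rcases le_total x.val y.val with h | h
    · exact interval_reach s hs (y.val - x.val) x y hx hy (by omega)
    · exact (interval_reach s hs (x.val - y.val) y x hy hx (by omega)).symm

/-- Two-interval split allocation: agent `i0` gets the prefix `[0,c)`, agent `i1` the rest. -/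
lemma twoSplit {m n : ℕ} (u : Fin n → Fin m → ℝ) (i0 i1 : Fin n) (h01 : i0 ≠ i1) (c : ℕ) :
    ∃ B : Fin n → Finset (Fin m), IsAlloc B ∧ (∀ i, ConnB (pathGraph m) (B i)) ∧
      ∑ i, ∑ v ∈ B i, u i v =
        (∑ v ∈ Finset.filter (fun v : Fin m => v.val < c) Finset.univ, u i0 v) +
        ∑ v ∈ Finset.filter (fun v : Fin m => ¬ v.val < c) Finset.univ, u i1 v := by
  classical
  set P : Finset (Fin m) := Finset.filter (fun v : Fin m => v.val < c) Finset.univ with hP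
  set Q : Finset (Fin m) := Finset.filter (fun v : Fin m => ¬ v.val < c) Finset.univ with hQ
  have hPQ : Disjoint P Q := by
    rw [Finset.disjoint_left]
    intro v hv hv'
    simp only [hP, hQ, Finset.mem_filter, Finset.mem_univ, true_and] at hv hv'
    exact hv' hv
  refine ⟨fun i => if i = i0 then P else if i = i1 then Q else ∅, ⟨?_, ?_⟩, ?_, ?_⟩
  · intro i j hij
    dsimp only
    split_ifs <;> first | exact hPQ | exact hPQ.symm | simp_all
  · ext v
    simp only [Finset.mem_biUnion, Finset.mem_univ, iff_true]
    by_cases hv : v.val < c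
    · exact ⟨i0, by simp [hP, hv]⟩
    · refine ⟨i1, ?_⟩
      rw [if_neg (Ne.symm h01), if_pos rfl]
      simpa [hQ] using hv
  · intro i
    dsimp only
    by_cases hi0 : i = i0
    · rw [if_pos hi0]
      refine interval_connB P ?_
      intro x y z hx hz hxy hyz
      simp only [hP, Finset.mem_filter, Finset.mem_univ, true_and] at hx hz ⊢
      omega
    · rw [if_neg hi0]
      by_cases hi1 : i = i1
      · rw [if_pos hi1]
        refine interval_connB Q ?_
        intro x y z hx hz hxy hyz
        simp only [hQ, Finset.mem_filter, Finset.mem_univ, true_and] at hx hz ⊢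
        omega
      · rw [if_neg hi1]; exact Or.inl rfl
  · have hz : ∀ i ∈ Finset.univ, i ∉ ({i0, i1} : Finset (Fin n)) →
        ∑ v ∈ (if i = i0 then P else if i = i1 then Q else ∅), u i v = 0 := by
      intro i _ hi
      simp only [Finset.mem_insert, Finset.mem_singleton, not_or] at hi
      simp [hi.1, hi.2]
    rw [← Finset.sum_subset (Finset.subset_univ ({i0, i1} : Finset (Fin n))) hz,
      Finset.sum_pair h01]
    simp [h01, Ne.symm h01]

/-- for a path on `m ≥ 1` vertices and `n ≥ 3` agents with normalized
nonnegative utilities, the utilitarian price of connectivity is at most `n − 1/(nm)`: the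
welfare of any allocation is matched up to that factor by a connected allocation. -/
theorem util_poc_path_upper (m n : ℕ) (hm : 1 ≤ m) (hn : 3 ≤ n)
    (u : Fin n → Fin m → ℝ) (hu : ∀ i v, 0 ≤ u i v) (hnorm : ∀ i, ∑ v, u i v = 1)
    (A : Fin n → Finset (Fin m)) (hA : IsAlloc A) :
    ∃ B : Fin n → Finset (Fin m), IsAlloc B ∧ (∀ i, ConnB (pathGraph m) (B i)) ∧
      ∑ i, ∑ v ∈ A i, u i v ≤
        ((n : ℝ) - 1 / ((n : ℝ) * m)) * ∑ i, ∑ v ∈ B i, u i v := by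
  classical
  have hmR : (1 : ℝ) ≤ (m : ℝ) := by exact_mod_cast hm
  have hnR : (3 : ℝ) ≤ (n : ℝ) := by exact_mod_cast hn
  have hmpos : (0 : ℝ) < m := by linarith
  have hnpos : (0 : ℝ) < n := by linarith
  have hnm : (0 : ℝ) < (n : ℝ) * m := by positivity
  -- each agent's allocated value is at most 1
  have hval : ∀ i, ∑ v ∈ A i, u i v ≤ 1 := by
    intro i
    rw [← hnorm i]
    exact Finset.sum_le_sum_of_subset_of_nonneg (Finset.subset_univ _)
      (fun v _ _ => hu i v)
  have hWn : ∑ i, ∑ v ∈ A i, u i v ≤ (n : ℝ) := by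
    calc ∑ i, ∑ v ∈ A i, u i v ≤ ∑ _i : Fin n, (1 : ℝ) := Finset.sum_le_sum fun i _ => hval i
    _ = n := by simp
  -- prefix sums
  set Pre : ℕ → Finset (Fin m) := fun c => Finset.filter (fun v : Fin m => v.val < c) Finset.univ
    with hPre
  have hcompl : ∀ (i : Fin n) (c : ℕ),
      ∑ v ∈ Finset.filter (fun v : Fin m => ¬ v.val < c) Finset.univ, u i v
        = 1 - ∑ v ∈ Pre c, u i v := by
    intro i c
    have := Finset.sum_filter_add_sum_filter_not Finset.univ (fun v : Fin m => v.val < c) (u i)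
    rw [hnorm i] at this
    simp only [hPre]
    linarith
  by_cases hW : ∑ i, ∑ v ∈ A i, u i v ≤ (n : ℝ) - 1 / ((n : ℝ) * m)
  · -- trivial case: give everything to agent 0
    obtain ⟨B, hB1, hB2, hB3⟩ := twoSplit u ⟨0, by omega⟩ ⟨1, by omega⟩ (by simp) m
    refine ⟨B, hB1, hB2, ?_⟩
    have h1 : ∑ i, ∑ v ∈ B i, u i v = 1 := by
      rw [hB3]
      have h2 : Finset.filter (fun v : Fin m => v.val < m) Finset.univ = Finset.univ := by
        ext v; simp [v.isLt]
      have h3 : Finset.filter (fun v : Fin m => ¬ v.val < m) Finset.univ = ∅ := by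
        ext v; simp [v.isLt]
      rw [h2, h3, hnorm]; simp
    rw [h1, mul_one]; exact hW
  · push_neg at hW
    -- every item not owned by i has u i value < 1/(nm)
    have hsmall : ∀ (i : Fin n) (v : Fin m), v ∉ A i → u i v < 1 / ((n : ℝ) * m) := by
      intro i v hv
      have h1 : ∑ j, (1 - ∑ w ∈ A j, u j w) < 1 / ((n : ℝ) * m) := by
        rw [Finset.sum_sub_distrib]
        simp only [Finset.sum_const, Finset.card_univ, Fintype.card_fin, nsmul_eq_mul, mul_one]
        linarith
      have h2 : 1 - ∑ w ∈ A i, u i w < 1 / ((n : ℝ) * m) := by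
        have h5 : (1 - ∑ w ∈ A i, u i w) ≤ ∑ j, (1 - ∑ w ∈ A j, u j w) := by
          refine Finset.single_le_sum (f := fun j => 1 - ∑ w ∈ A j, u j w) ?_ (Finset.mem_univ i)
          intro j _
          have := hval j
          linarith
        linarith
      have h3 : u i v ≤ 1 - ∑ w ∈ A i, u i w := by
        have hsplit := Finset.sum_filter_add_sum_filter_not Finset.univ
          (fun w : Fin m => w ∈ A i) (u i)
        have hA' : Finset.filter (fun w : Fin m => w ∈ A i) Finset.univ = A i := by
          ext w; simp
        rw [hA', hnorm i] at hsplit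
        have hvmem : v ∈ Finset.filter (fun w : Fin m => w ∉ A i) Finset.univ := by
          simp [hv]
        have := Finset.single_le_sum (f := u i) (fun w _ => hu i w) hvmem
        linarith
      linarith
    -- agent 0 has an item worth at least 1/m
    set i0 : Fin n := ⟨0, by omega⟩ with hi0def
    set i1 : Fin n := ⟨1, by omega⟩ with hi1def
    have hne : i0 ≠ i1 := by simp [hi0def, hi1def, Fin.ext_iff]
    have hex : ∃ g : Fin m, 1 / (m : ℝ) ≤ u i0 g := by
      by_contra h
      push_neg at h
      have hne' : (Finset.univ : Finset (Fin m)).Nonempty := ⟨⟨0, by omega⟩, Finset.mem_univ _⟩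
      have h1 : ∑ v : Fin m, u i0 v < ∑ _v : Fin m, 1 / (m : ℝ) :=
        Finset.sum_lt_sum_of_nonempty hne' (fun v _ => h v)
      rw [hnorm i0] at h1
      simp only [Finset.sum_const, Finset.card_univ, Fintype.card_fin, nsmul_eq_mul] at h1
      rw [mul_one_div, div_self (ne_of_gt hmpos)] at h1
      exact lt_irrefl _ h1
    obtain ⟨g, hg⟩ := hex
    have hmnm : 1 / ((n : ℝ) * m) < 1 / (m : ℝ) := by
      rw [div_lt_div_iff₀ hnm hmpos]
      nlinarith
    have hgA : g ∈ A i0 := by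
      by_contra hng
      have := hsmall i0 g hng
      linarith
    have hgn1 : g ∉ A i1 := fun hg1 => (Finset.disjoint_left.mp (hA.1 i0 i1 hne) hgA) hg1
    have hu1g : u i1 g < 1 / ((n : ℝ) * m) := hsmall i1 g hgn1
    -- prefix increment
    have hstep : ∀ i : Fin n, ∑ v ∈ Pre (g.val + 1), u i v = ∑ v ∈ Pre g.val, u i v + u i g := by
      intro i
      have hins : Pre (g.val + 1) = insert g (Pre g.val) := by
        ext v
        simp only [hPre, Finset.mem_filter, Finset.mem_univ, true_and, Finset.mem_insert,
          Fin.ext_iff]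
        omega
      rw [hins, Finset.sum_insert (by simp [hPre])]
      ring
    set r : ℝ := ((n : ℝ) - 1) / (2 * (n : ℝ) * m) with hr
    set a : ℝ := ∑ v ∈ Pre g.val, u i0 v - ∑ v ∈ Pre g.val, u i1 v with ha
    set b : ℝ := ∑ v ∈ Pre (g.val + 1), u i0 v - ∑ v ∈ Pre (g.val + 1), u i1 v with hb
    have h2r : 2 * r = 1 / (m : ℝ) - 1 / ((n : ℝ) * m) := by
      rw [hr]
      field_simp
    have hab : a + 2 * r < b := by
      rw [hb, hstep i0, hstep i1, h2r, ha]
      linarith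
    have hrpos : 0 < r := by
      rw [hr]
      exact div_pos (by linarith) (by positivity)
    -- key numeric inequality
    have hfac : (0 : ℝ) < (n : ℝ) - 1 / ((n : ℝ) * m) := by
      have : 1 / ((n : ℝ) * m) ≤ 1 := by
        rw [div_le_one hnm]
        nlinarith
      linarith
    have hkey : (n : ℝ) ≤ ((n : ℝ) - 1 / ((n : ℝ) * m)) * (1 + r) := by
      rw [← sub_nonneg]
      have heq : ((n : ℝ) - 1 / ((n : ℝ) * m)) * (1 + r) - n =
          (((n : ℝ) ^ 2 * m - 1) * (2 * n * m + n - 1) - 2 * n ^ 3 * m ^ 2) /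
            (2 * n ^ 2 * m ^ 2) := by
        rw [hr]
        field_simp
        ring
      rw [heq]
      apply div_nonneg _ (by positivity)
      have e1 : (0:ℝ) ≤ ((n:ℝ) - 3) * ((n:ℝ) * (n:ℝ) * m) := mul_nonneg (by linarith) (by positivity)
      have e2 : (0:ℝ) ≤ ((n:ℝ) - 3) * ((n:ℝ) * m) := mul_nonneg (by linarith) (by positivity)
      have e3 : (0:ℝ) ≤ ((m:ℝ) - 1) * (n:ℝ) := mul_nonneg (by linarith) (by linarith)
      nlinarith [e1, e2, e3]
    -- main bound given a connected allocation of welfare ≥ 1 + r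
    have hmain : ∀ B : Fin n → Finset (Fin m), 1 + r ≤ ∑ i, ∑ v ∈ B i, u i v →
        ∑ i, ∑ v ∈ A i, u i v ≤ ((n : ℝ) - 1 / ((n : ℝ) * m)) * ∑ i, ∑ v ∈ B i, u i v := by
      intro B hB
      calc ∑ i, ∑ v ∈ A i, u i v ≤ (n : ℝ) := hWn
        _ ≤ ((n : ℝ) - 1 / ((n : ℝ) * m)) * (1 + r) := hkey
        _ ≤ ((n : ℝ) - 1 / ((n : ℝ) * m)) * ∑ i, ∑ v ∈ B i, u i v :=
            mul_le_mul_of_nonneg_left hB (le_of_lt hfac)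
    by_cases hbr : r ≤ b
    · obtain ⟨B, hB1, hB2, hB3⟩ := twoSplit u i0 i1 hne (g.val + 1)
      refine ⟨B, hB1, hB2, hmain B ?_⟩
      rw [hB3, hcompl i1 (g.val + 1)]
      have : ∑ v ∈ Finset.filter (fun v : Fin m => v.val < g.val + 1) Finset.univ, u i0 v
          = ∑ v ∈ Pre (g.val + 1), u i0 v := by rw [hPre]
      rw [this]
      rw [hb] at hbr
      linarith
    · push_neg at hbr
      have har : a < -r := by linarith
      obtain ⟨B, hB1, hB2, hB3⟩ := twoSplit u i1 i0 hne.symm g.val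
      refine ⟨B, hB1, hB2, hmain B ?_⟩
      rw [hB3, hcompl i0 g.val]
      have : ∑ v ∈ Finset.filter (fun v : Fin m => v.val < g.val) Finset.univ, u i1 v
          = ∑ v ∈ Pre g.val, u i1 v := by rw [hPre]
      rw [this]
      rw [ha] at har
      linarith
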